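/- Let R be a commutative ring, let x, y ∈ SL₂(R), let ε ∈ {1, −1}, and set y₁ = x²·y·x^{2ε}·y⁻¹. Then for every integer k ∈ ℤ, tr(x² · y₁^{k−1}) = tr(x⁻² · y₁^{k}), where tr denotes the trace of the underlying 2×2 matrix. -/

import Mathlib

open Matrix

private lemma sl2_inv_coe (R : Type*) [CommRing R] (g : SpecialLinearGroup (Fin 2) R) :
    ((g⁻¹ : SpecialLinearGroup (Fin 2) R) : Matrix (Fin 2) (Fin 2) R)
      = Matrix.trace (g : Matrix (Fin 2) (Fin 2) R) • (1 : Matrix (Fin 2) (Fin 2) R)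
          - (g : Matrix (Fin 2) (Fin 2) R) := by
  have h : ((g⁻¹ : SpecialLinearGroup (Fin 2) R) : Matrix (Fin 2) (Fin 2) R)
      = adjugate (g : Matrix (Fin 2) (Fin 2) R) := rfl
  rw [h]
  ext i j
  fin_cases i <;> fin_cases j <;>
    simp [Matrix.adjugate_fin_two, Matrix.trace_fin_two, Matrix.one_apply]

/-- tr of inverse equals tr in SL₂ -/
private lemma sl2_trace_inv (R : Type*) [CommRing R] (g : SpecialLinearGroup (Fin 2) R) :
    Matrix.trace ((g⁻¹ : SpecialLinearGroup (Fin 2) R) : Matrix (Fin 2) (Fin 2) R)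
      = Matrix.trace (g : Matrix (Fin 2) (Fin 2) R) := by
  rw [sl2_inv_coe]
  simp [Matrix.trace_sub, Matrix.trace_smul, Matrix.trace_one, smul_eq_mul]
  ring

/-- Cayley–Hamilton style identity: tr(g⁻¹h) = tr g · tr h − tr(g h). -/
private lemma sl2_trace_inv_mul (R : Type*) [CommRing R] (g h : SpecialLinearGroup (Fin 2) R) :
    Matrix.trace ((g⁻¹ * h : SpecialLinearGroup (Fin 2) R) : Matrix (Fin 2) (Fin 2) R)
      = Matrix.trace (g : Matrix (Fin 2) (Fin 2) R)
          * Matrix.trace (h : Matrix (Fin 2) (Fin 2) R)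
        - Matrix.trace ((g * h : SpecialLinearGroup (Fin 2) R) : Matrix (Fin 2) (Fin 2) R) := by
  have : ((g⁻¹ * h : SpecialLinearGroup (Fin 2) R) : Matrix (Fin 2) (Fin 2) R)
      = ((g⁻¹ : SpecialLinearGroup (Fin 2) R) : Matrix (Fin 2) (Fin 2) R) * h := rfl
  rw [this, sl2_inv_coe, sub_mul, Matrix.smul_mul, Matrix.one_mul, Matrix.trace_sub,
    Matrix.trace_smul, smul_eq_mul]
  rfl

private lemma sl2_trace_mul_comm (R : Type*) [CommRing R]
    (g h : SpecialLinearGroup (Fin 2) R) :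
    Matrix.trace ((g * h : SpecialLinearGroup (Fin 2) R) : Matrix (Fin 2) (Fin 2) R)
      = Matrix.trace ((h * g : SpecialLinearGroup (Fin 2) R) : Matrix (Fin 2) (Fin 2) R) := by
  have h1 : ((g * h : SpecialLinearGroup (Fin 2) R) : Matrix (Fin 2) (Fin 2) R)
      = (g : Matrix (Fin 2) (Fin 2) R) * h := rfl
  have h2 : ((h * g : SpecialLinearGroup (Fin 2) R) : Matrix (Fin 2) (Fin 2) R)
      = (h : Matrix (Fin 2) (Fin 2) R) * g := rfl
  rw [h1, h2, Matrix.trace_mul_comm]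

/-- key induction: if tr A = tr B then tr(A (AB)^m) = tr(B (AB)^m) for all m : ℤ. -/
private lemma sl2_key (R : Type*) [CommRing R] (A B : SpecialLinearGroup (Fin 2) R)
    (hAB : Matrix.trace (A : Matrix (Fin 2) (Fin 2) R)
        = Matrix.trace (B : Matrix (Fin 2) (Fin 2) R)) (m : ℤ) :
    Matrix.trace ((A * (A * B) ^ m : SpecialLinearGroup (Fin 2) R) : Matrix (Fin 2) (Fin 2) R)
      = Matrix.trace ((B * (A * B) ^ m : SpecialLinearGroup (Fin 2) R) :
          Matrix (Fin 2) (Fin 2) R) := by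
  have hsplit : ∀ n : ℤ, ((A * B) ^ (n + 1) : SpecialLinearGroup (Fin 2) R)
      = (A * B) * (A * B) ^ n := by
    intro n
    rw [add_comm, _root_.zpow_add, zpow_one]
  have step : ∀ n : ℤ,
      Matrix.trace ((A * (A * B) ^ (n + 1) : SpecialLinearGroup (Fin 2) R) :
          Matrix (Fin 2) (Fin 2) R)
        = Matrix.trace (A : Matrix (Fin 2) (Fin 2) R)
            * Matrix.trace (((A * B) ^ (n + 1) : SpecialLinearGroup (Fin 2) R) :
                Matrix (Fin 2) (Fin 2) R)
          - Matrix.trace ((B * (A * B) ^ n : SpecialLinearGroup (Fin 2) R) :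
              Matrix (Fin 2) (Fin 2) R) := by
    intro n
    have e : (A⁻¹ * (A * B) ^ (n + 1) : SpecialLinearGroup (Fin 2) R)
        = B * (A * B) ^ n := by
      rw [hsplit n, ← mul_assoc, ← mul_assoc, inv_mul_cancel, one_mul]
    have h := sl2_trace_inv_mul R A ((A * B) ^ (n + 1))
    rw [e] at h
    linear_combination h
  have step' : ∀ n : ℤ,
      Matrix.trace ((B * (A * B) ^ (n + 1) : SpecialLinearGroup (Fin 2) R) :
          Matrix (Fin 2) (Fin 2) R)
        = Matrix.trace (A : Matrix (Fin 2) (Fin 2) R)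
            * Matrix.trace (((A * B) ^ (n + 1) : SpecialLinearGroup (Fin 2) R) :
                Matrix (Fin 2) (Fin 2) R)
          - Matrix.trace ((A * (A * B) ^ n : SpecialLinearGroup (Fin 2) R) :
              Matrix (Fin 2) (Fin 2) R) := by
    intro n
    have e : ((A * B) ^ (n + 1) * B⁻¹ : SpecialLinearGroup (Fin 2) R)
        = (A * B) ^ n * A := by
      rw [_root_.zpow_add, zpow_one, mul_assoc, mul_assoc, mul_inv_cancel, mul_one]
    have h := sl2_trace_inv_mul R B ((A * B) ^ (n + 1))
    rw [sl2_trace_mul_comm R B⁻¹ ((A * B) ^ (n + 1)), e,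
      sl2_trace_mul_comm R ((A * B) ^ n) A] at h
    rw [hAB]
    linear_combination h
  induction m using Int.induction_on with
  | zero => simpa using hAB
  | succ n ih => rw [step, step', ih]
  | pred n ih =>
      have s1 := step (-(n : ℤ) - 1)
      have s2 := step' (-(n : ℤ) - 1)
      have hn0 : (-(n : ℤ) - 1 + 1) = -(n : ℤ) := by ring
      rw [hn0] at s1 s2
      rw [s1, s2] at ih
      have h2 : -((n : ℤ) + 1) = -(n : ℤ) - 1 := by ring
      rw [show (-(↑n : ℤ) - 1) = -((n : ℤ) + 1) from by ring] at ih ⊢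
      linear_combination ih

/-- Lemma 2.1: for `x, y ∈ SL₂(R)`, `ε = ±1` and `y₁ = x²·y·x^{2ε}·y⁻¹`, one has
`tr(x² · y₁^{k-1}) = tr(x⁻² · y₁^k)` for every integer `k`. -/
theorem trace_sq_mul_zpow_sub_one_eq_trace_inv_sq_mul_zpow
    (R : Type*) [CommRing R] (x y : Matrix.SpecialLinearGroup (Fin 2) R)
    (ε : ℤ) (hε : ε = 1 ∨ ε = -1) (k : ℤ) :
    Matrix.trace
      ((x ^ 2 * (x ^ 2 * y * x ^ (2 * ε) * y⁻¹) ^ (k - 1) :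
        Matrix.SpecialLinearGroup (Fin 2) R) : Matrix (Fin 2) (Fin 2) R)
    = Matrix.trace
      ((x ^ (-2 : ℤ) * (x ^ 2 * y * x ^ (2 * ε) * y⁻¹) ^ k :
        Matrix.SpecialLinearGroup (Fin 2) R) : Matrix (Fin 2) (Fin 2) R) := by
  set A : Matrix.SpecialLinearGroup (Fin 2) R := x ^ 2 with hA
  set B : Matrix.SpecialLinearGroup (Fin 2) R := y * x ^ (2 * ε) * y⁻¹ with hB
  have hy1 : (x ^ 2 * y * x ^ (2 * ε) * y⁻¹ : Matrix.SpecialLinearGroup (Fin 2) R) = A * B := by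
    rw [hA, hB]; group
  have htr : Matrix.trace (A : Matrix (Fin 2) (Fin 2) R)
      = Matrix.trace (B : Matrix (Fin 2) (Fin 2) R) := by
    have hconj : Matrix.trace (B : Matrix (Fin 2) (Fin 2) R)
        = Matrix.trace ((x ^ (2 * ε) : Matrix.SpecialLinearGroup (Fin 2) R) :
            Matrix (Fin 2) (Fin 2) R) := by
      rw [hB, sl2_trace_mul_comm R (y * x ^ (2 * ε)) y⁻¹]
      congr 1
      group
    rcases hε with h | h
    · have hx : (x ^ (2 * (1 : ℤ)) : Matrix.SpecialLinearGroup (Fin 2) R) = A := by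
        rw [hA]; group
      rw [hconj, h, hx]
    · have hx : (x ^ (2 * (-1 : ℤ)) : Matrix.SpecialLinearGroup (Fin 2) R) = A⁻¹ := by
        rw [hA]; group
      rw [hconj, h, hx, sl2_trace_inv]
  have hinv : (x ^ (-2 : ℤ) : Matrix.SpecialLinearGroup (Fin 2) R) = A⁻¹ := by
    rw [hA]; group
  have hL : (x ^ (-2 : ℤ) * (A * B) ^ k : Matrix.SpecialLinearGroup (Fin 2) R)
      = B * (A * B) ^ (k - 1) := by
    have hk : ((A * B) ^ k : Matrix.SpecialLinearGroup (Fin 2) R)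
        = (A * B) * (A * B) ^ (k - 1) := by
      rw [← _root_.zpow_one_add]
      congr 1
      ring
    rw [hinv, hk, ← mul_assoc, ← mul_assoc, inv_mul_cancel, one_mul]
  rw [hy1, hL]
  exact sl2_key R A B htr (k - 1)
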